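/- Horizontal decomposition preserves the path-constraint semantics: if a DAG G with vertex labels is partitioned into subgraphs G₁, …, Gₙ where Gᵢ consists of all vertices and edges reachable from the i-th entry vertex of G, then the disjunction over all complete paths of G of the conjunctions of labels equals the disjunction over i of the same quantity computed over Gᵢ; in particular, every complete path of G appears (as a label sequence) as a complete path of exactly one Gᵢ. -/

import Mathlib

/-- A directed acyclic graph on a vertex type `V`. -/
structure DAG (V : Type*) where
  E : V → V → Prop
  acyclic : ∀ v, ¬ Relation.TransGen E v v

/-- An entry vertex of the induced subgraph on `S`: it lies in `S` and has no incoming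
edge from inside `S`.  (For `S = Set.univ` this is an entry vertex of the whole graph.) -/
def entryIn {V : Type*} (G : DAG V) (S : Set V) (v : V) : Prop :=
  v ∈ S ∧ ∀ u ∈ S, ¬ G.E u v

/-- An exit vertex of the induced subgraph on `S`. -/
def exitIn {V : Type*} (G : DAG V) (S : Set V) (v : V) : Prop :=
  v ∈ S ∧ ∀ u ∈ S, ¬ G.E v u

/-- A complete (entry-to-exit) path of the induced subgraph of `G` on `S`. -/
def completePathIn {V : Type*} (G : DAG V) (S : Set V) (p : List V) : Prop :=
  ∃ h : p ≠ [], (∀ x ∈ p, x ∈ S) ∧ p.Chain' G.E ∧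
    entryIn G S (p.head h) ∧ exitIn G S (p.getLast h)

/-- The set of vertices reachable from `e` (via directed paths, possibly of length 0). -/
def reachSet {V : Type*} (G : DAG V) (e : V) : Set V :=
  {u | Relation.ReflTransGen G.E e u}

/-- Horizontal decomposition preserves the path-constraint semantics: if the entry
vertices of a finite labeled DAG `G` are enumerated by `e : ι → V` and `Gᵢ` is the
subgraph of all vertices and edges reachable from the `i`-th entry, then the
disjunction over complete paths of `G` of the conjunction of labels equals the
disjunction over `i` of the same quantity over `Gᵢ`; moreover every complete path of
`G` is a complete path of exactly one `Gᵢ`. -/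

private lemma chain_reach {V : Type*} {R : V → V → Prop} :
    ∀ (p : List V) (h : p ≠ []), p.Chain' R → ∀ x ∈ p,
      Relation.ReflTransGen R (p.head h) x := by
  intro p
  induction p with
  | nil => intro h; exact absurd rfl h
  | cons a l ih =>
    intro _ hc x hx
    rcases List.mem_cons.1 hx with rfl | hx
    · exact Relation.ReflTransGen.refl
    · have hl : l ≠ [] := List.ne_nil_of_mem hx
      rw [List.Chain', List.isChain_cons] at hc
      have h1 : R a (l.head hl) := hc.1 _ (List.head?_eq_head hl)
      exact Relation.ReflTransGen.trans (Relation.ReflTransGen.single h1)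
        (ih hl hc.2 x hx)

private lemma key {V ι : Type*} (G : DAG V) (e : ι → V)
    (hent : ∀ i, entryIn G Set.univ (e i)) (i : ι) (p : List V) :
    completePathIn G (reachSet G (e i)) p ↔
      completePathIn G Set.univ p ∧ ∃ h : p ≠ [], p.head h = e i := by
  constructor
  · rintro ⟨h, hmem, hch, ⟨hhr, hhe⟩, ⟨hlr, hle⟩⟩
    have hhead : p.head h = e i := by
      by_contra hne
      rcases (Relation.reflTransGen_iff_eq_or_transGen.1 hhr) with heq | ht
      · exact hne heq
      · obtain ⟨u, hu, hedge⟩ := Relation.TransGen.tail'_iff.1 ht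
        exact hhe u hu hedge
    refine ⟨⟨h, fun x _ => trivial, hch, ?_, ?_⟩, h, hhead⟩
    · rw [hhead]; exact hent i
    · exact ⟨trivial, fun u _ hE => hle u (Relation.ReflTransGen.tail hlr hE) hE⟩
  · rintro ⟨⟨h, _, hch, hhen, hhex⟩, h2, hhead⟩
    have hmem : ∀ x ∈ p, x ∈ reachSet G (e i) := by
      intro x hx
      have := chain_reach p h hch x hx
      rw [hhead] at this; exact this
    refine ⟨h, hmem, hch, ⟨hmem _ (List.head_mem h), ?_⟩,
      hmem _ (List.getLast_mem h), fun u _ hE => hhex.2 u trivial hE⟩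
    intro u _ hE
    exact hhen.2 u trivial hE

theorem horizontal_decomposition {V ι : Type*} [Fintype V] (G : DAG V)
    (label : V → Prop) (e : ι → V)
    (hinj : Function.Injective e)
    (hent : ∀ i, entryIn G Set.univ (e i))
    (hsurj : ∀ v, entryIn G Set.univ v → ∃ i, e i = v) :
    ((∃ p, completePathIn G Set.univ p ∧ ∀ x ∈ p, label x) ↔
      ∃ i, ∃ p, completePathIn G (reachSet G (e i)) p ∧ ∀ x ∈ p, label x) ∧
    (∀ p, completePathIn G Set.univ p →
      ∃! i, completePathIn G (reachSet G (e i)) p) := by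
  have main : ∀ p, completePathIn G Set.univ p →
      ∃! i, completePathIn G (reachSet G (e i)) p := by
    intro p hp
    obtain ⟨h, hmem, hch, hhen, hhex⟩ := hp
    obtain ⟨i, hi⟩ := hsurj _ hhen
    refine ⟨i, (key G e hent i p).2 ⟨⟨h, hmem, hch, hhen, hhex⟩, h, hi.symm⟩, ?_⟩
    intro j hj
    obtain ⟨_, h2, hhead⟩ := (key G e hent j p).1 hj
    exact hinj (hhead.symm.trans hi.symm)
  refine ⟨⟨?_, ?_⟩, main⟩
  · rintro ⟨p, hp, hlab⟩
    obtain ⟨i, hi, -⟩ := main p hp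
    exact ⟨i, p, hi, hlab⟩
  · rintro ⟨i, p, hp, hlab⟩
    exact ⟨p, ((key G e hent i p).1 hp).1, hlab⟩
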